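/- Let q be a primitive n-th root of unity with n > 1, and let f ∈ k[t] be nonzero. Then f(u) and f(v) are both central in B_q(f) if and only if n divides j for every j ∈ supp(f). -/

import Mathlib

noncomputable section

open FreeAlgebra Polynomial

/-- The defining relations of the algebra `B_q(f)`:
`uv = q·vu`, `wu = q·uw + f(v)`, `wv = q⁻¹·vw + f(u)`,
where `u, v, w` are the generators `ι 0, ι 1, ι 2` of the free algebra. -/
inductive BRel (k : Type*) [Field k] (q : k) (f : Polynomial k) :
    FreeAlgebra k (Fin 3) → FreeAlgebra k (Fin 3) → Prop
  | uv : BRel k q f (ι k 0 * ι k 1) (q • (ι k 1 * ι k 0))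
  | wu : BRel k q f (ι k 2 * ι k 0) (q • (ι k 0 * ι k 2) + aeval (ι k 1) f)
  | wv : BRel k q f (ι k 2 * ι k 1) (q⁻¹ • (ι k 1 * ι k 2) + aeval (ι k 0) f)

/-- The algebra `B_q(f)`. -/
abbrev BAlg (k : Type*) [Field k] (q : k) (f : Polynomial k) := RingQuot (BRel k q f)

def Bu (k : Type*) [Field k] (q : k) (f : Polynomial k) : BAlg k q f :=
  RingQuot.mkAlgHom k (BRel k q f) (ι k 0)
def Bv (k : Type*) [Field k] (q : k) (f : Polynomial k) : BAlg k q f :=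
  RingQuot.mkAlgHom k (BRel k q f) (ι k 1)
def Bw (k : Type*) [Field k] (q : k) (f : Polynomial k) : BAlg k q f :=
  RingQuot.mkAlgHom k (BRel k q f) (ι k 2)

namespace Stmt5Aux

variable {k : Type*} [Field k] (q : k) (f : Polynomial k)

abbrev M (k : Type*) [Field k] := (ℕ × ℕ) →₀ k

def cc (a j : ℕ) : k := ∑ t ∈ Finset.range a, q ^ (a - 1 - t) * q⁻¹ ^ (t * j)
def dd (b j : ℕ) : k := ∑ i ∈ Finset.range b, q⁻¹ ^ (i * (j + 1))

@[simp] lemma cc_zero (j : ℕ) : cc q 0 j = 0 := by simp [cc]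
@[simp] lemma dd_zero (j : ℕ) : dd q 0 j = 0 := by simp [dd]

lemma cc_succ (a j : ℕ) : cc q (a + 1) j = q * cc q a j + q⁻¹ ^ (a * j) := by
  unfold cc
  rw [Finset.sum_range_succ]
  congr 1
  · rw [Finset.mul_sum]
    refine Finset.sum_congr rfl fun t ht => ?_
    rw [Finset.mem_range] at ht
    rw [← mul_assoc, ← pow_succ']
    congr 2
    omega
  · simp

lemma dd_succ (b j : ℕ) : dd q (b + 1) j = q⁻¹ ^ (j + 1) * dd q b j + 1 := by
  unfold dd
  rw [Finset.sum_range_succ']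
  congr 1
  · rw [Finset.mul_sum]
    refine Finset.sum_congr rfl fun i hi => ?_
    rw [← pow_add]
    congr 1
    ring
  · simp

def Uop : M k →ₗ[k] M k :=
  Finsupp.linearCombination k fun p => Finsupp.single (p.1 + 1, p.2) 1

def Vop : M k →ₗ[k] M k :=
  Finsupp.linearCombination k fun p => Finsupp.single (p.1, p.2 + 1) (q⁻¹ ^ p.1)

def Wop : M k →ₗ[k] M k :=
  Finsupp.linearCombination k fun p =>
    ∑ j ∈ f.support, f.coeff j •
      (cc q p.1 j • Finsupp.single (p.1 - 1, p.2 + j) 1 +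
        (q ^ p.1 * dd q p.2 j) • Finsupp.single (p.1 + j, p.2 - 1) (1 : k))

@[simp] lemma Uop_single (a b : ℕ) (s : k) :
    Uop (Finsupp.single (a, b) s) = Finsupp.single (a + 1, b) s := by
  simp [Uop, Finsupp.linearCombination_single, Finsupp.smul_single]

@[simp] lemma Vop_single (a b : ℕ) (s : k) :
    Vop q (Finsupp.single (a, b) s) = Finsupp.single (a, b + 1) (s * q⁻¹ ^ a) := by
  simp [Vop, Finsupp.linearCombination_single, Finsupp.smul_single, smul_eq_mul]

lemma Wop_single (a b : ℕ) (s : k) :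
    Wop q f (Finsupp.single (a, b) s) =
      s • ∑ j ∈ f.support, f.coeff j •
        (cc q a j • Finsupp.single (a - 1, b + j) 1 +
          (q ^ a * dd q b j) • Finsupp.single (a + j, b - 1) (1 : k)) := by
  simp [Wop, Finsupp.linearCombination_single]

lemma Uop_pow (j a b : ℕ) (s : k) :
    (Uop ^ j : M k →ₗ[k] M k) (Finsupp.single (a, b) s) = Finsupp.single (a + j, b) s := by
  induction j with
  | zero => simp
  | succ j ih =>
    rw [pow_succ', Module.End.mul_apply, ih, Uop_single, add_assoc]

lemma Vop_pow (j a b : ℕ) (s : k) :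
    (Vop q ^ j) (Finsupp.single (a, b) s) = Finsupp.single (a, b + j) (s * q⁻¹ ^ (a * j)) := by
  induction j generalizing b s with
  | zero => simp
  | succ j ih =>
    rw [pow_succ, Module.End.mul_apply, Vop_single, ih]
    rw [mul_assoc, ← pow_add]
    congr 2
    · omega
    · congr 1; ring


@[simp] lemma Vop_single_one (a b : ℕ) :
    Vop q (Finsupp.single (a, b) 1) = q⁻¹ ^ a • Finsupp.single (a, b + 1) 1 := by
  rw [Vop_single, Finsupp.smul_single, smul_eq_mul, mul_one, one_mul]

lemma Vop_pow_one (j a b : ℕ) :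
    (Vop q ^ j) (Finsupp.single (a, b) 1) = q⁻¹ ^ (a * j) • Finsupp.single (a, b + j) 1 := by
  rw [Vop_pow, Finsupp.smul_single, smul_eq_mul, mul_one, one_mul]

lemma relUV (hq0 : q ≠ 0) : (Uop * Vop q : M k →ₗ[k] M k) = q • (Vop q * Uop) := by
  refine Module.Basis.ext Finsupp.basisSingleOne fun p => ?_
  obtain ⟨a, b⟩ := p
  simp only [Finsupp.coe_basisSingleOne, Module.End.mul_apply, LinearMap.smul_apply,
    Vop_single, Uop_single, Finsupp.smul_single, smul_eq_mul, one_mul]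
  congr 1
  rw [pow_succ]
  field_simp

lemma relWU : (Wop q f * Uop : M k →ₗ[k] M k) = q • (Uop * Wop q f) + aeval (Vop q) f := by
  refine Module.Basis.ext Finsupp.basisSingleOne fun p => ?_
  obtain ⟨a, b⟩ := p
  simp only [Finsupp.coe_basisSingleOne, Module.End.mul_apply, LinearMap.add_apply,
    LinearMap.smul_apply, Uop_single, Wop_single, aeval_endomorphism, Polynomial.sum_def,
    Vop_pow_one, one_smul, one_mul, map_sum, map_smul, map_add, Finset.smul_sum]
  rw [← Finset.sum_add_distrib]
  refine Finset.sum_congr rfl fun j hj => ?_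
  rcases a with _ | a
  · simp only [Nat.add_sub_cancel, Nat.zero_sub, Nat.zero_add, cc_zero, zero_smul, smul_zero,
      zero_add, cc_succ, mul_zero, Nat.zero_mul, pow_zero, Uop_single, one_smul, one_mul,
      Nat.sub_self, pow_one]
    rw [show (1 : ℕ) + j = j + 1 by omega]
    module
  · simp only [Nat.add_sub_cancel, cc_succ, Uop_single]
    rw [show a + 1 + 1 + j = a + 1 + j + 1 by omega,
      show (a + 1) * j = a * j + j by ring, pow_add]
    module

lemma relWV (hq0 : q ≠ 0) :
    (Wop q f * Vop q : M k →ₗ[k] M k) = q⁻¹ • (Vop q * Wop q f) + aeval Uop f := by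
  refine Module.Basis.ext Finsupp.basisSingleOne fun p => ?_
  obtain ⟨a, b⟩ := p
  simp only [Finsupp.coe_basisSingleOne, Module.End.mul_apply, LinearMap.add_apply,
    LinearMap.smul_apply, Vop_single_one, Wop_single, aeval_endomorphism, Polynomial.sum_def,
    Uop_pow, one_smul, one_mul, map_sum, map_smul, map_add, Finset.smul_sum]
  rw [← Finset.sum_add_distrib]
  refine Finset.sum_congr rfl fun j hj => ?_
  rw [show b + 1 + j = b + j + 1 by omega]
  rcases a with _ | a <;> rcases b with _ | b <;>
    simp only [cc_zero, dd_zero, dd_succ, zero_smul, smul_zero, zero_add, add_zero,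
      mul_zero, zero_mul, Nat.zero_sub, Nat.add_sub_cancel, Nat.sub_self, pow_zero,
      one_mul, Nat.zero_add, one_smul] <;>
    match_scalars <;> (simp only [inv_pow]; field_simp; try ring; try tauto)


def rho0 : FreeAlgebra k (Fin 3) →ₐ[k] Module.End k (M k) :=
  FreeAlgebra.lift k ![Uop, Vop q, Wop q f]

@[simp] lemma rho0_u : rho0 q f (ι k 0) = Uop := by
  simp [rho0, FreeAlgebra.lift_ι_apply]

@[simp] lemma rho0_v : rho0 q f (ι k 1) = Vop q := by
  simp [rho0, FreeAlgebra.lift_ι_apply]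

@[simp] lemma rho0_w : rho0 q f (ι k 2) = Wop q f := by
  simp [rho0, FreeAlgebra.lift_ι_apply]

lemma rho0_rel (hq0 : q ≠ 0) : ∀ ⦃x y : FreeAlgebra k (Fin 3)⦄,
    BRel k q f x y → rho0 q f x = rho0 q f y := by
  intro x y r
  cases r with
  | uv =>
    rw [map_mul, map_smul, map_mul, rho0_u, rho0_v]
    exact relUV q hq0
  | wu =>
    rw [map_mul, map_add, map_smul, map_mul, ← Polynomial.aeval_algHom_apply,
      rho0_u, rho0_v, rho0_w]
    exact relWU q f
  | wv =>
    rw [map_mul, map_add, map_smul, map_mul, ← Polynomial.aeval_algHom_apply,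
      rho0_u, rho0_v, rho0_w]
    exact relWV q f hq0

def rho (hq0 : q ≠ 0) : BAlg k q f →ₐ[k] Module.End k (M k) :=
  RingQuot.liftAlgHom k ⟨rho0 q f, rho0_rel q f hq0⟩

@[simp] lemma rho_Bu (hq0 : q ≠ 0) : rho q f hq0 (Bu k q f) = Uop := by
  rw [Bu, rho, RingQuot.liftAlgHom_mkAlgHom_apply, rho0_u]

@[simp] lemma rho_Bv (hq0 : q ≠ 0) : rho q f hq0 (Bv k q f) = Vop q := by
  rw [Bv, rho, RingQuot.liftAlgHom_mkAlgHom_apply, rho0_v]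

/-- The hard direction: commutation of `f(u)` with `v` forces `q ^ j = 1` on the support. -/
lemma hard (hq0 : q ≠ 0)
    (hcomm : Bv k q f * aeval (Bu k q f) f = aeval (Bu k q f) f * Bv k q f)
    (j : ℕ) (hj : j ∈ f.support) : q ^ j = 1 := by
  have h := congrArg (rho q f hq0) hcomm
  rw [map_mul, map_mul, ← Polynomial.aeval_algHom_apply, rho_Bu, rho_Bv] at h
  have h2 := LinearMap.congr_fun h (Finsupp.single ((0 : ℕ), (0 : ℕ)) (1 : k))
  rw [Module.End.mul_apply, Module.End.mul_apply] at h2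
  simp only [aeval_endomorphism, Polynomial.sum_def, Uop_pow, Vop_single_one, pow_zero,
    one_smul, Nat.zero_add, map_sum, map_smul] at h2
  have h3 := DFunLike.congr_fun h2 (j, 1)
  simp only [Finsupp.finset_sum_apply, Finsupp.smul_apply, Finsupp.single_apply,
    smul_eq_mul, Prod.mk.injEq, and_true, mul_ite, mul_one, mul_zero] at h3
  rw [Finset.sum_ite_eq' f.support j, Finset.sum_ite_eq' f.support j] at h3
  simp only [hj, if_true] at h3
  have hc : f.coeff j ≠ 0 := Polynomial.mem_support_iff.mp hj
  field_simp at h3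
  rw [one_div, inv_pow, inv_eq_one] at h3
  exact h3

section BSide

lemma Brel1 : Bu k q f * Bv k q f = q • (Bv k q f * Bu k q f) := by
  have := RingQuot.mkAlgHom_rel k (BRel.uv (k := k) (q := q) (f := f))
  simpa [Bu, Bv, map_mul, map_smul] using this

lemma Brel2 : Bw k q f * Bu k q f = q • (Bu k q f * Bw k q f) + aeval (Bv k q f) f := by
  have := RingQuot.mkAlgHom_rel k (BRel.wu (k := k) (q := q) (f := f))
  simpa [Bu, Bv, Bw, map_mul, map_smul, map_add, ← Polynomial.aeval_algHom_apply] using this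

lemma Brel3 : Bw k q f * Bv k q f = q⁻¹ • (Bv k q f * Bw k q f) + aeval (Bu k q f) f := by
  have := RingQuot.mkAlgHom_rel k (BRel.wv (k := k) (q := q) (f := f))
  simpa [Bu, Bv, Bw, map_mul, map_smul, map_add, ← Polynomial.aeval_algHom_apply] using this

lemma Bvu (hq0 : q ≠ 0) : Bv k q f * Bu k q f = q⁻¹ • (Bu k q f * Bv k q f) := by
  rw [Brel1, smul_smul, inv_mul_cancel₀ hq0, one_smul]

lemma Bvu_pow (hq0 : q ≠ 0) (j : ℕ) :
    Bv k q f * (Bu k q f) ^ j = (q⁻¹) ^ j • ((Bu k q f) ^ j * Bv k q f) := by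
  induction j with
  | zero => simp
  | succ j ih =>
    rw [pow_succ, ← mul_assoc, ih, smul_mul_assoc, mul_assoc, Bvu q f hq0,
      mul_smul_comm, smul_smul, ← mul_assoc, ← pow_succ, ← pow_succ]

lemma Buv_pow (j : ℕ) :
    Bu k q f * (Bv k q f) ^ j = q ^ j • ((Bv k q f) ^ j * Bu k q f) := by
  induction j with
  | zero => simp
  | succ j ih =>
    rw [pow_succ, ← mul_assoc, ih, smul_mul_assoc, mul_assoc, Brel1,
      mul_smul_comm, smul_smul, ← mul_assoc, ← pow_succ, ← pow_succ]

lemma commute_aeval {A : Type*} [Ring A] [Algebra k A] (x y : A)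
    (h : ∀ j ∈ f.support, y * x ^ j = x ^ j * y) : y * aeval x f = aeval x f * y := by
  rw [Polynomial.aeval_def, Polynomial.eval₂_eq_sum, Polynomial.sum_def,
    Finset.mul_sum, Finset.sum_mul]
  refine Finset.sum_congr rfl fun j hj => ?_
  calc y * (algebraMap k A (f.coeff j) * x ^ j)
      = algebraMap k A (f.coeff j) * (y * x ^ j) := by
        rw [← mul_assoc, ← Algebra.commutes, mul_assoc]
    _ = algebraMap k A (f.coeff j) * x ^ j * y := by rw [h j hj, mul_assoc]

lemma Bwu_pow (hc : aeval (Bv k q f) f * Bu k q f = Bu k q f * aeval (Bv k q f) f) (j : ℕ) :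
    Bw k q f * (Bu k q f) ^ (j + 1) =
      q ^ (j + 1) • ((Bu k q f) ^ (j + 1) * Bw k q f) +
        (∑ i ∈ Finset.range (j + 1), q ^ i) • ((Bu k q f) ^ j * aeval (Bv k q f) f) := by
  induction j with
  | zero =>
    simpa using Brel2 q f
  | succ j ih =>
    calc Bw k q f * (Bu k q f) ^ (j + 1 + 1)
        = (Bw k q f * (Bu k q f) ^ (j + 1)) * Bu k q f := by rw [pow_succ, mul_assoc]
      _ = q ^ (j + 1) • ((Bu k q f) ^ (j + 1) * (Bw k q f * Bu k q f)) +
            (∑ i ∈ Finset.range (j + 1), q ^ i) • ((Bu k q f) ^ (j + 1) * aeval (Bv k q f) f) := by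
          rw [ih, add_mul, smul_mul_assoc, smul_mul_assoc, mul_assoc, mul_assoc,
            hc, ← mul_assoc, ← mul_assoc, ← pow_succ]
      _ = q ^ (j + 1 + 1) • ((Bu k q f) ^ (j + 1 + 1) * Bw k q f) +
            q ^ (j + 1) • ((Bu k q f) ^ (j + 1) * aeval (Bv k q f) f) +
            (∑ i ∈ Finset.range (j + 1), q ^ i) • ((Bu k q f) ^ (j + 1) * aeval (Bv k q f) f) := by
          rw [Brel2, mul_add, mul_smul_comm, smul_add, smul_smul, ← mul_assoc, ← pow_succ,
            ← pow_succ]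
      _ = _ := by
          conv_rhs => rw [Finset.sum_range_succ, add_smul]
          module

lemma Bwv_pow (hc : aeval (Bu k q f) f * Bv k q f = Bv k q f * aeval (Bu k q f) f) (j : ℕ) :
    Bw k q f * (Bv k q f) ^ (j + 1) =
      (q⁻¹) ^ (j + 1) • ((Bv k q f) ^ (j + 1) * Bw k q f) +
        (∑ i ∈ Finset.range (j + 1), (q⁻¹) ^ i) • ((Bv k q f) ^ j * aeval (Bu k q f) f) := by
  induction j with
  | zero =>
    simpa using Brel3 q f
  | succ j ih =>
    calc Bw k q f * (Bv k q f) ^ (j + 1 + 1)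
        = (Bw k q f * (Bv k q f) ^ (j + 1)) * Bv k q f := by rw [pow_succ, mul_assoc]
      _ = (q⁻¹) ^ (j + 1) • ((Bv k q f) ^ (j + 1) * (Bw k q f * Bv k q f)) +
            (∑ i ∈ Finset.range (j + 1), (q⁻¹) ^ i) • ((Bv k q f) ^ (j + 1) * aeval (Bu k q f) f) := by
          rw [ih, add_mul, smul_mul_assoc, smul_mul_assoc, mul_assoc, mul_assoc,
            hc, ← mul_assoc, ← mul_assoc, ← pow_succ]
      _ = (q⁻¹) ^ (j + 1 + 1) • ((Bv k q f) ^ (j + 1 + 1) * Bw k q f) +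
            (q⁻¹) ^ (j + 1) • ((Bv k q f) ^ (j + 1) * aeval (Bu k q f) f) +
            (∑ i ∈ Finset.range (j + 1), (q⁻¹) ^ i) • ((Bv k q f) ^ (j + 1) * aeval (Bu k q f) f) := by
          rw [Brel3, mul_add, mul_smul_comm, smul_add, smul_smul, ← mul_assoc, ← pow_succ,
            ← pow_succ]
      _ = _ := by
          conv_rhs => rw [Finset.sum_range_succ, add_smul]
          module

lemma central_of (z : BAlg k q f) (h0 : Bu k q f * z = z * Bu k q f)
    (h1 : Bv k q f * z = z * Bv k q f) (h2 : Bw k q f * z = z * Bw k q f) :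
    z ∈ Set.center (BAlg k q f) := by
  rw [Semigroup.mem_center_iff]
  intro g
  obtain ⟨x, rfl⟩ := RingQuot.mkAlgHom_surjective k (BRel k q f) g
  refine FreeAlgebra.induction k (Fin 3) (fun r => ?_) (fun i => ?_)
    (fun a b ha hb => ?_) (fun a b ha hb => ?_) x
  · rw [AlgHom.commutes]
    exact Algebra.commutes r z
  · fin_cases i
    · exact h0
    · exact h1
    · exact h2
  · rw [map_mul, mul_assoc, hb, ← mul_assoc, ha, mul_assoc]
  · rw [map_add, add_mul, mul_add, ha, hb]

end BSide

end Stmt5Aux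

open Stmt5Aux

/-- for `q` a primitive `n`-th root of unity with `n > 1` and
`f ≠ 0`, the elements `f(u)` and `f(v)` are both central in `B_q(f)` iff
`n ∣ j` for every `j ∈ supp(f)`. -/
theorem stmt5 (k : Type*) [Field k] [IsAlgClosed k] [CharZero k]
    (q : k) (hq0 : q ≠ 0) (n : ℕ) (hn : 1 < n) (hq : IsPrimitiveRoot q n)
    (f : Polynomial k) (hf : f ≠ 0) :
    (aeval (Bu k q f) f ∈ Set.center (BAlg k q f) ∧
        aeval (Bv k q f) f ∈ Set.center (BAlg k q f)) ↔
      ∀ j ∈ f.support, n ∣ j := by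
  constructor
  · rintro ⟨hA, -⟩ j hj
    exact (hq.pow_eq_one_iff_dvd j).mp
      (hard q f hq0 ((Semigroup.mem_center_iff.mp hA) (Bv k q f)) j hj)
  · intro H
    have hqs : ∀ j ∈ f.support, q ^ j = 1 := by
      intro j hj
      obtain ⟨m, rfl⟩ := H j hj
      rw [pow_mul, hq.pow_eq_one, one_pow]
    have hne1 : q ≠ 1 := hq.ne_one hn
    have hne1' : q⁻¹ ≠ 1 := fun h => hne1 (by rw [← inv_inv q, h, inv_one])
    have hqs' : ∀ j ∈ f.support, q⁻¹ ^ j = 1 := by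
      intro j hj; rw [inv_pow, hqs j hj, inv_one]
    have hsum : ∀ j ∈ f.support, ∑ i ∈ Finset.range j, q ^ i = 0 := by
      intro j hj; rw [geom_sum_eq hne1, hqs j hj, sub_self, zero_div]
    have hsum' : ∀ j ∈ f.support, ∑ i ∈ Finset.range j, q⁻¹ ^ i = 0 := by
      intro j hj; rw [geom_sum_eq hne1', hqs' j hj, sub_self, zero_div]
    have huFu : Bu k q f * aeval (Bu k q f) f = aeval (Bu k q f) f * Bu k q f :=
      commute_aeval f _ _ (fun j _ => by rw [← pow_succ', pow_succ])
    have hvFv : Bv k q f * aeval (Bv k q f) f = aeval (Bv k q f) f * Bv k q f :=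
      commute_aeval f _ _ (fun j _ => by rw [← pow_succ', pow_succ])
    have hvFu : Bv k q f * aeval (Bu k q f) f = aeval (Bu k q f) f * Bv k q f :=
      commute_aeval f _ _ (fun j hj => by
        rw [Bvu_pow q f hq0, hqs' j hj, one_smul])
    have huFv : Bu k q f * aeval (Bv k q f) f = aeval (Bv k q f) f * Bu k q f :=
      commute_aeval f _ _ (fun j hj => by
        rw [Buv_pow q f, hqs j hj, one_smul])
    have hwFu : Bw k q f * aeval (Bu k q f) f = aeval (Bu k q f) f * Bw k q f := by
      refine commute_aeval f _ _ (fun j hj => ?_)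
      rcases j with _ | j
      · simp
      · rw [Bwu_pow q f huFv.symm j, hqs _ hj, one_smul, hsum _ hj, zero_smul, add_zero]
    have hwFv : Bw k q f * aeval (Bv k q f) f = aeval (Bv k q f) f * Bw k q f := by
      refine commute_aeval f _ _ (fun j hj => ?_)
      rcases j with _ | j
      · simp
      · rw [Bwv_pow q f hvFu.symm j, hqs' _ hj, one_smul, hsum' _ hj, zero_smul, add_zero]
    exact ⟨central_of q f _ huFu hvFu hwFu, central_of q f _ huFv hvFv hwFv⟩
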